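/- For all n, k ≥ 0, g_{n,k}(1) = (-1)^{n-k} ((1+i)^k + (1-i)^k), where i = √-1; in particular g_{n,k}(1) ≡ 0 (mod 4) for k ≥ 2 with k ≢ 0 mod 4 appropriately, and the stated value is an integer. -/
import Mathlib


open Polynomial

/-- f 0 = 2, f 1 = X^2 - 4X + 1, f (n+2) = (X^2-4X+1) f (n+1) - X^2 f n. -/
noncomputable def madanF : ℕ → Polynomial ℤ
  | 0 => 2
  | 1 => X ^ 2 - 4 * X + 1
  | (n + 2) => (X ^ 2 - 4 * X + 1) * madanF (n + 1) - X ^ 2 * madanF n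

/-- Σ_{j=0}^{k} C(k,j) f_{n+j}, the numerator of g_{n,k}. -/
noncomputable def gNum (n k : ℕ) : Polynomial ℤ :=
  ∑ j ∈ Finset.range (k + 1), (k.choose j : ℤ) • madanF (n + j)

/-- the quotient (f_n + f_{n+1})/(X-1) -/
noncomputable def madanH : ℕ → Polynomial ℤ
  | 0 => X - 3
  | 1 => X ^ 3 - 7 * X ^ 2 + 10 * X - 2
  | (n + 2) => (X ^ 2 - 4 * X + 1) * madanH (n + 1) - X ^ 2 * madanH n

noncomputable def madanG : ℕ → ℕ → Polynomial ℤ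
  | n, 0 => madanF n
  | n, 1 => madanH n
  | n, (k + 2) => (X - 3) * madanG n (k + 1) - 2 * madanG n k

lemma madanH_mul : ∀ n, (X - 1) * madanH n = madanF n + madanF (n + 1)
  | 0 => by simp only [madanH, madanF]; ring
  | 1 => by
      show (X - 1) * madanH 1 = madanF 1 + madanF 2
      simp only [madanH, madanF]; ring
  | (n + 2) => by
      have a := madanH_mul n
      have b := madanH_mul (n + 1)
      rw [show n + 1 + 1 = n + 2 from rfl] at b
      show (X - 1) * madanH (n + 2) = madanF (n + 2) + madanF (n + 3)
      have e2 : madanF (n + 2) = (X ^ 2 - 4 * X + 1) * madanF (n + 1) - X ^ 2 * madanF n := rfl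
      have e3 : madanF (n + 3) = (X ^ 2 - 4 * X + 1) * madanF (n + 2) - X ^ 2 * madanF (n + 1) := rfl
      have h2 : madanH (n + 2) = (X ^ 2 - 4 * X + 1) * madanH (n + 1) - X ^ 2 * madanH n := rfl
      rw [h2, e3, e2]
      linear_combination (X ^ 2 - 4 * X + 1) * b - X ^ 2 * a + (X ^ 2 - 4 * X + 1) * e2

lemma gNum_eq (n k : ℕ) :
    gNum n k = ∑ j ∈ Finset.range (k + 1), ((k.choose j : ℤ) : Polynomial ℤ) * madanF (n + j) := by
  simp [gNum, zsmul_eq_mul]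

lemma gNum_zero (n : ℕ) : gNum n 0 = madanF n := by
  simp [gNum_eq]

lemma gNum_one (n : ℕ) : gNum n 1 = madanF n + madanF (n + 1) := by
  rw [gNum_eq, Finset.sum_range_succ, Finset.sum_range_one]
  norm_num

lemma gNum_pascal (n k : ℕ) : gNum n (k + 1) = gNum n k + gNum (n + 1) k := by
  simp only [gNum_eq]
  rw [Finset.sum_range_succ' _ (k + 1)]
  have key : ∀ j ∈ Finset.range (k + 1),
      (((k + 1).choose (j + 1) : ℤ) : Polynomial ℤ) * madanF (n + (j + 1))
        = ((k.choose j : ℤ) : Polynomial ℤ) * madanF (n + 1 + j)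
          + ((k.choose (j + 1) : ℤ) : Polynomial ℤ) * madanF (n + (j + 1)) := by
    intro j _
    have h : (k + 1).choose (j + 1) = k.choose j + k.choose (j + 1) := Nat.choose_succ_succ k j
    rw [h]
    push_cast
    rw [show n + 1 + j = n + (j + 1) from by ring]
    ring
  rw [Finset.sum_congr rfl key, Finset.sum_add_distrib]
  have tail : (∑ j ∈ Finset.range (k + 1), ((k.choose (j + 1) : ℤ) : Polynomial ℤ) * madanF (n + (j + 1)))
      + (((k + 1).choose 0 : ℤ) : Polynomial ℤ) * madanF (n + 0)
      = ∑ j ∈ Finset.range (k + 1), ((k.choose j : ℤ) : Polynomial ℤ) * madanF (n + j) := by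
    have h0 : (((k + 1).choose 0 : ℤ) : Polynomial ℤ) = ((k.choose 0 : ℤ) : Polynomial ℤ) := by
      simp
    rw [h0, ← Finset.sum_range_succ' (fun j => ((k.choose j : ℤ) : Polynomial ℤ) * madanF (n + j)) (k + 1),
      Finset.sum_range_succ]
    simp
  rw [add_assoc, tail]
  ring

lemma gNum_shift (n k : ℕ) :
    gNum (n + 2) k = (X ^ 2 - 4 * X + 1) * gNum (n + 1) k - X ^ 2 * gNum n k := by
  simp only [gNum_eq, Finset.mul_sum]
  rw [← Finset.sum_sub_distrib]
  refine Finset.sum_congr rfl fun j _ => ?_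
  rw [show n + 2 + j = n + j + 2 from by ring, show n + 1 + j = n + j + 1 from by ring,
    show madanF (n + j + 2) = (X ^ 2 - 4 * X + 1) * madanF (n + j + 1) - X ^ 2 * madanF (n + j) from rfl]
  ring

lemma gNum_rec (n k : ℕ) :
    gNum n (k + 2) = (X - 1) * (X - 3) * gNum n (k + 1) - 2 * (X - 1) ^ 2 * gNum n k := by
  have p1 := gNum_pascal n (k + 1)
  have p2 := gNum_pascal n k
  have p3 := gNum_pascal (n + 1) k
  have s := gNum_shift n k
  rw [show n + 1 + 1 = n + 2 from rfl] at p3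
  linear_combination p1 + p3 + s - (X ^ 2 - 4 * X + 2) * p2

lemma madanG_mul : ∀ k n, (X - 1) ^ k * madanG n k = gNum n k
  | 0, n => by
      show (X - 1) ^ 0 * madanF n = gNum n 0
      rw [pow_zero, one_mul, gNum_zero]
  | 1, n => by
      show (X - 1) ^ 1 * madanH n = gNum n 1
      rw [pow_one, madanH_mul, gNum_one]
  | (k + 2), n => by
      have a := madanG_mul k n
      have b := madanG_mul (k + 1) n
      have hG : madanG n (k + 2) = (X - 3) * madanG n (k + 1) - 2 * madanG n k := rfl
      rw [hG, gNum_rec, ← b, ← a]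
      ring

lemma evalF : ∀ n, (aeval (1 : ℂ) (madanF n)) = 2 * (-1 : ℂ) ^ n
  | 0 => by simp [madanF, map_ofNat]
  | 1 => by simp [madanF, map_ofNat]; norm_num
  | (n + 2) => by
      have a := evalF n
      have b := evalF (n + 1)
      have e : madanF (n + 2) = (X ^ 2 - 4 * X + 1) * madanF (n + 1) - X ^ 2 * madanF n := rfl
      rw [e]
      simp only [map_sub, map_add, map_mul, map_pow, aeval_X, map_ofNat, map_one]
      rw [a, b]
      ring

lemma evalH : ∀ n, (aeval (1 : ℂ) (madanH n)) = -2 * (-1 : ℂ) ^ n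
  | 0 => by simp [madanH, map_ofNat]; norm_num
  | 1 => by simp [madanH, map_ofNat]; norm_num
  | (n + 2) => by
      have a := evalH n
      have b := evalH (n + 1)
      have e : madanH (n + 2) = (X ^ 2 - 4 * X + 1) * madanH (n + 1) - X ^ 2 * madanH n := rfl
      rw [e]
      simp only [map_sub, map_add, map_mul, map_pow, aeval_X, map_ofNat, map_one]
      rw [a, b]
      ring

lemma evalG : ∀ k n, (aeval (1 : ℂ) (madanG n k))
    = (-1 : ℂ) ^ n * (-1 : ℂ) ^ k * ((1 + Complex.I) ^ k + (1 - Complex.I) ^ k)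
  | 0, n => by
      show (aeval (1 : ℂ) (madanF n)) = _
      rw [evalF]; ring
  | 1, n => by
      show (aeval (1 : ℂ) (madanH n)) = _
      rw [evalH]; ring
  | (k + 2), n => by
      have a := evalG k n
      have b := evalG (k + 1) n
      have hG : madanG n (k + 2) = (X - 3) * madanG n (k + 1) - 2 * madanG n k := rfl
      rw [hG]
      simp only [map_sub, map_mul, map_ofNat, aeval_X, map_one]
      rw [a, b]
      linear_combination (-((-1:ℂ)^n * (-1:ℂ)^k * ((1 + Complex.I)^k + (1 - Complex.I)^k))) * Complex.I_sq

theorem stmt_9 : ∀ n k : ℕ, ∀ g : Polynomial ℤ,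
    (X - 1) ^ k * g = gNum n k →
    (aeval (1 : ℂ) g : ℂ) =
      (-1 : ℂ) ^ ((n : ℤ) - (k : ℤ)) *
        ((1 + Complex.I) ^ k + (1 - Complex.I) ^ k) := by
  intro n k g hg
  have hX : (X - 1 : Polynomial ℤ) ≠ 0 := by
    intro h
    have := congrArg (Polynomial.eval 0) h
    simp at this
  have hgG : g = madanG n k := by
    have := madanG_mul k n
    exact mul_left_cancel₀ (pow_ne_zero k hX) (hg.trans this.symm)
  rw [hgG, evalG]
  have hinv : ((-1 : ℂ) ^ k)⁻¹ = (-1 : ℂ) ^ k := by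
    rcases Nat.even_or_odd k with h | h
    · rw [h.neg_one_pow]; norm_num
    · rw [h.neg_one_pow]; norm_num
  have hz : (-1 : ℂ) ^ ((n : ℤ) - (k : ℤ)) = (-1 : ℂ) ^ n * (-1 : ℂ) ^ k := by
    rw [zpow_sub₀ (by norm_num : (-1 : ℂ) ≠ 0), zpow_natCast, zpow_natCast, div_eq_mul_inv, hinv]
  rw [hz]
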